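/- Consider a 3-star graph with Neumann conditions: functions f_i(x) = A_i cos(kx) on [0, L_i] for i = 1,2,3 with k > 0. The central vertex conditions A₁cos(kL₁) = A₂cos(kL₂) = A₃cos(kL₃) and A₁sin(kL₁) + A₂sin(kL₂) + A₃sin(kL₃) = 0 admit a nonzero solution (A₁,A₂,A₃) if and only if sin(kL₁)cos(kL₂)cos(kL₃) + cos(kL₁)sin(kL₂)cos(kL₃) + cos(kL₁)cos(kL₂)sin(kL₃) = 0. -/

import Mathlib

open Real

lemma sin_ne_of_cos_eq_zero {x : ℝ} (h : Real.cos x = 0) : Real.sin x ≠ 0 := by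
  intro hs
  nlinarith [Real.sin_sq_add_cos_sq x]

/-- The Neumann 3-star vertex conditions admit a nonzero solution iff the robust
secular equation holds. -/
theorem star3_neumann_secular (L₁ L₂ L₃ k : ℝ) (hL₁ : 0 < L₁) (hL₂ : 0 < L₂) (hL₃ : 0 < L₃)
    (hk : 0 < k) :
    (∃ A : ℝ × ℝ × ℝ, A ≠ 0 ∧
      A.1 * cos (k * L₁) = A.2.1 * cos (k * L₂) ∧
      A.2.1 * cos (k * L₂) = A.2.2 * cos (k * L₃) ∧
      A.1 * sin (k * L₁) + A.2.1 * sin (k * L₂) + A.2.2 * sin (k * L₃) = 0) ↔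
    sin (k * L₁) * cos (k * L₂) * cos (k * L₃) + cos (k * L₁) * sin (k * L₂) * cos (k * L₃)
      + cos (k * L₁) * cos (k * L₂) * sin (k * L₃) = 0 := by
  set s₁ := sin (k * L₁); set s₂ := sin (k * L₂); set s₃ := sin (k * L₃)
  set c₁ := cos (k * L₁); set c₂ := cos (k * L₂); set c₃ := cos (k * L₃)
  constructor
  · rintro ⟨⟨a, b, c⟩, hA, h1, h2, h3⟩
    simp only at h1 h2 h3
    have hE1 : a * (s₁ * c₂ * c₃ + c₁ * s₂ * c₃ + c₁ * c₂ * s₃) = 0 := by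
      linear_combination (s₂ * c₃ + c₂ * s₃) * h1 + (c₂ * s₃) * h2 + c₂ * c₃ * h3
    have hE2 : b * (s₁ * c₂ * c₃ + c₁ * s₂ * c₃ + c₁ * c₂ * s₃) = 0 := by
      linear_combination (-(s₁ * c₃)) * h1 + (c₁ * s₃) * h2 + c₁ * c₃ * h3
    have hE3 : c * (s₁ * c₂ * c₃ + c₁ * s₂ * c₃ + c₁ * c₂ * s₃) = 0 := by
      linear_combination (-(s₁ * c₂)) * h1 + (-(s₁ * c₂ + c₁ * s₂)) * h2 + c₁ * c₂ * h3
    rcases mul_eq_zero.mp hE1 with ha | hE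
    · rcases mul_eq_zero.mp hE2 with hb | hE
      · rcases mul_eq_zero.mp hE3 with hc | hE
        · exact absurd (by simp [Prod.ext_iff, ha, hb, hc]) hA
        · exact hE
      · exact hE
    · exact hE
  · intro hE
    by_cases h1 : c₁ = 0
    · by_cases h2 : c₂ = 0
      · refine ⟨(s₂, -s₁, 0), ?_, ?_, ?_, ?_⟩
        · have : s₁ ≠ 0 := sin_ne_of_cos_eq_zero h1
          simp [Prod.ext_iff, this]
        · simp [h1, h2]
        · simp [h2]
        · simp only; ring
      · by_cases h3 : c₃ = 0
        · refine ⟨(s₃, 0, -s₁), ?_, ?_, ?_, ?_⟩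
          · have : s₁ ≠ 0 := sin_ne_of_cos_eq_zero h1
            simp [Prod.ext_iff, this]
          · simp [h1]
          · simp [h3]
          · simp only; ring
        · refine ⟨(c₂ * c₃, c₁ * c₃, c₁ * c₂), ?_, by ring, by ring, ?_⟩
          · simp [Prod.ext_iff, h2, h3]
          · simp only; linear_combination hE
    · by_cases h2 : c₂ = 0
      · by_cases h3 : c₃ = 0
        · refine ⟨(0, s₃, -s₂), ?_, ?_, ?_, ?_⟩
          · have : s₂ ≠ 0 := sin_ne_of_cos_eq_zero h2
            simp [Prod.ext_iff, this]
          · simp [h2]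
          · simp [h2, h3]
          · simp only; ring
        · refine ⟨(c₂ * c₃, c₁ * c₃, c₁ * c₂), ?_, by ring, by ring, ?_⟩
          · simp [Prod.ext_iff, h1, h3]
          · simp only; linear_combination hE
      · refine ⟨(c₂ * c₃, c₁ * c₃, c₁ * c₂), ?_, by ring, by ring, ?_⟩
        · simp [Prod.ext_iff, h1, h2]
        · simp only; linear_combination hE
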